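/- arXiv:1506.04307 — 3 statements merged into one kernel-verified Lean document; each statement's English description precedes it below -/
import Mathlib

section
/- Let K, L be bounded convex sets in the plane with nonempty interior, where K has area 1. Let K_n be n points chosen independently and uniformly at random from K. Fix any ε > 0. Then with probability tending to 1 as n → ∞, there exists a hole contained in K homothetic to L with area at least (1−ε)·log n / n. -/
open MeasureTheory Filter Set Bornology
open scoped ENNReal NNReal Pointwise

noncomputable section

/-- Rotation of the plane by angle `θ`. -/
def rot (θ : ℝ) (p : ℝ × ℝ) : ℝ × ℝ :=
  (p.1 * Real.cos θ - p.2 * Real.sin θ, p.1 * Real.sin θ + p.2 * Real.cos θ)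

/-- A rectangle: the image of an axis-parallel closed rectangle `[0,a] × [0,b]`
(with `a, b > 0`) under a rigid motion (rotation followed by translation). -/
def IsRectangle (R : Set (ℝ × ℝ)) : Prop :=
  ∃ (θ : ℝ) (c : ℝ × ℝ) (a b : ℝ), 0 < a ∧ 0 < b ∧
    R = (fun p => c + rot θ p) '' (Icc 0 a ×ˢ Icc 0 b)

/-- `S` is a homothetic copy of `L`: `S = x + r • L` for some `x` and ratio `r > 0`. -/
def IsHomothet (L S : Set (ℝ × ℝ)) : Prop :=
  ∃ (x : ℝ × ℝ) (r : ℝ), 0 < r ∧ S = (fun y => x + r • y) '' L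

/-- The joint distribution of `n` points chosen independently, each uniformly at
random from `K` (where `K` has area 1, so the uniform distribution on `K` is the
restriction of Lebesgue measure to `K`). -/
def unifPts (K : Set (ℝ × ℝ)) (n : ℕ) : Measure (Fin n → ℝ × ℝ) :=
  Measure.pi fun _ => volume.restrict K

lemma exp_le_one_sub {a : ℝ} (h0 : 0 ≤ a) (h2 : a ≤ 1/2) :
    Real.exp (-(a + 2*a^2)) ≤ 1 - a := by
  have h1 : (1 - a) * Real.exp (a + 2*a^2) ≥ 1 := by
    have := Real.add_one_le_exp (a + 2*a^2)
    nlinarith [Real.exp_pos (a + 2*a^2)]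
  rw [Real.exp_neg]
  rw [inv_le_iff_one_le_mul₀ (Real.exp_pos _)]
  linarith [h1]

lemma second_moment {Ω : Type*} [MeasurableSpace Ω] (μ : Measure Ω) [IsProbabilityMeasure μ]
    {ι : Type*} [Fintype ι] (E : ι → Set Ω) (hE : ∀ i, MeasurableSet (E i)) (p : ℝ≥0∞)
    (hp : ∀ i, μ (E i) = p) (hpair : ∀ i j, i ≠ j → μ (E i ∩ E j) ≤ p ^ 2) :
    1 - ((Fintype.card ι : ℝ≥0∞) * p)⁻¹ ≤ μ (⋃ i, E i) := by
  classical
  set m : ℝ≥0∞ := (Fintype.card ι : ℝ≥0∞) with hm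
  set s : ℝ≥0∞ := m * p with hsdef
  rcases eq_or_ne s 0 with hs0 | hs0
  · simp [hs0]
  have hcard : Fintype.card ι ≠ 0 := by
    intro h; exact hs0 (by simp [hsdef, hm, h])
  have hp1 : p ≤ 1 := by
    obtain ⟨i⟩ := Fintype.card_pos_iff.mp (Nat.pos_of_ne_zero hcard)
    rw [← hp i]; exact prob_le_one
  have hptop : p ≠ ∞ := (hp1.trans_lt ENNReal.one_lt_top).ne
  have hmtop : m ≠ ∞ := by simp [hm]
  have hstop : s ≠ ∞ := ENNReal.mul_ne_top hmtop hptop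
  set X : Ω → ℝ≥0∞ := fun ω => ∑ i, (E i).indicator 1 ω with hX
  have hXim : ∀ i : ι, Measurable ((E i).indicator (1 : Ω → ℝ≥0∞)) :=
    fun i => measurable_one.indicator (hE i)
  have hXm : Measurable X := by
    apply Finset.measurable_sum _ fun i _ => hXim i
  have hUm : MeasurableSet (⋃ i, E i) := MeasurableSet.iUnion hE
  have hint : ∫⁻ ω, X ω ∂μ = s := by
    rw [hX]
    rw [lintegral_finset_sum _ fun i _ => hXim i]
    have : ∀ i : ι, ∫⁻ ω, (E i).indicator 1 ω ∂μ = p := by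
      intro i
      rw [lintegral_indicator (hE i) _]
      simp [hp i]
    simp only [this, Finset.sum_const, Finset.card_univ, nsmul_eq_mul, hsdef, hm]
  -- second moment
  have hsq : ∀ ω, X ω ^ 2 = ∑ i, ∑ j, (E i ∩ E j).indicator 1 ω := by
    intro ω
    rw [hX, sq, Finset.sum_mul_sum]
    refine Finset.sum_congr rfl fun i _ => Finset.sum_congr rfl fun j _ => ?_
    rw [← inter_indicator_mul]
    simp [Set.indicator]
  have hint2 : ∫⁻ ω, X ω ^ 2 ∂μ ≤ s + s ^ 2 := by
    have hmeas2 : ∀ i j : ι, Measurable ((E i ∩ E j).indicator (1 : Ω → ℝ≥0∞)) :=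
      fun i j => measurable_one.indicator ((hE i).inter (hE j))
    calc ∫⁻ ω, X ω ^ 2 ∂μ = ∑ i, ∑ j, μ (E i ∩ E j) := by
          simp_rw [hsq]
          rw [lintegral_finset_sum _ fun i _ =>
            Finset.measurable_sum _ fun j _ => hmeas2 i j]
          refine Finset.sum_congr rfl fun i _ => ?_
          rw [lintegral_finset_sum _ fun j _ => hmeas2 i j]
          refine Finset.sum_congr rfl fun j _ => ?_
          rw [lintegral_indicator ((hE i).inter (hE j)) _]
          simp
      _ ≤ ∑ _i : ι, (p + m * p ^ 2) := by
          refine Finset.sum_le_sum fun i _ => ?_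
          rw [← Finset.add_sum_erase _ _ (Finset.mem_univ i)]
          have h1 : μ (E i ∩ E i) = p := by rw [Set.inter_self, hp i]
          have h2 : ∑ j ∈ Finset.univ.erase i, μ (E i ∩ E j) ≤ m * p ^ 2 := by
            calc ∑ j ∈ Finset.univ.erase i, μ (E i ∩ E j)
                ≤ ∑ _j ∈ Finset.univ.erase i, p ^ 2 := by
                  refine Finset.sum_le_sum fun j hj => ?_
                  exact hpair i j (Ne.symm (Finset.mem_erase.mp hj).1)
              _ = ((Finset.univ.erase i).card : ℝ≥0∞) * p ^ 2 := by
                  rw [Finset.sum_const, nsmul_eq_mul]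
              _ ≤ m * p ^ 2 := by
                  refine mul_le_mul_left ?_ _
                  rw [hm]
                  exact_mod_cast Finset.card_erase_le.trans (le_of_eq Finset.card_univ)
          rw [h1]
          exact add_le_add le_rfl h2
      _ = s + s ^ 2 := by
          rw [Finset.sum_const, Finset.card_univ, nsmul_eq_mul, hsdef]
          ring
  -- Cauchy–Schwarz
  have hXU : X = fun ω => (X ω) * (⋃ i, E i).indicator 1 ω := by
    funext ω
    by_cases h : ω ∈ ⋃ i, E i
    · simp [Set.indicator_of_mem h]
    · have hz : X ω = 0 := by
        rw [hX]
        refine Finset.sum_eq_zero fun i _ => ?_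
        exact Set.indicator_of_notMem (fun hi => h (Set.mem_iUnion.mpr ⟨i, hi⟩)) _
      simp [hz]
  have hCS : s ≤ (∫⁻ ω, X ω ^ 2 ∂μ) ^ (1/2:ℝ) * (μ (⋃ i, E i)) ^ (1/2:ℝ) := by
    have hconj : Real.HolderConjugate 2 2 := Real.HolderConjugate.two_two
    have hgm : Measurable ((⋃ i, E i).indicator (1 : Ω → ℝ≥0∞)) :=
      measurable_one.indicator hUm
    have h := ENNReal.lintegral_mul_le_Lp_mul_Lq μ hconj hXm.aemeasurable hgm.aemeasurable
    have hleft : ∫⁻ ω, (X * (⋃ i, E i).indicator (1 : Ω → ℝ≥0∞)) ω ∂μ = s := by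
      rw [← hint]; congr 1; funext ω
      show X ω * _ = X ω
      conv_rhs => rw [hXU]
    have hright : ∫⁻ ω, ((⋃ i, E i).indicator (1 : Ω → ℝ≥0∞) ω) ^ (2:ℝ) ∂μ
        = μ (⋃ i, E i) := by
      have heq : ∀ ω, ((⋃ i, E i).indicator (1 : Ω → ℝ≥0∞) ω) ^ (2:ℝ)
          = (⋃ i, E i).indicator 1 ω := by
        intro ω
        by_cases h : ω ∈ ⋃ i, E i <;>
          simp [Set.indicator_of_mem, Set.indicator_of_notMem, h, ENNReal.rpow_two]
      simp_rw [heq]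
      rw [lintegral_indicator hUm _]; simp
    rw [hleft, hright] at h
    simp_rw [ENNReal.rpow_two] at h
    exact h
  have hpow : ∀ x : ℝ≥0∞, (x ^ (1/2:ℝ)) ^ 2 = x := fun x => by
    rw [← ENNReal.rpow_natCast (x ^ (1/2:ℝ)) 2, ← ENNReal.rpow_mul]
    norm_num
  have hCS2 : s ^ 2 ≤ (∫⁻ ω, X ω ^ 2 ∂μ) * μ (⋃ i, E i) := by
    calc s ^ 2 ≤ ((∫⁻ ω, X ω ^ 2 ∂μ) ^ (1/2:ℝ) * μ (⋃ i, E i) ^ (1/2:ℝ)) ^ 2 := by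
          rw [sq, sq]; exact mul_le_mul' hCS hCS
      _ = _ := by rw [mul_pow, hpow, hpow]
  have hss0 : s + s ^ 2 ≠ 0 := fun h => hs0 (add_eq_zero.mp h).1
  have hsstop : s + s ^ 2 ≠ ∞ := ENNReal.add_ne_top.mpr ⟨hstop, ENNReal.pow_ne_top hstop⟩
  have hdiv : s ^ 2 / (s + s ^ 2) ≤ μ (⋃ i, E i) := by
    rw [ENNReal.div_le_iff_le_mul (Or.inl hss0) (Or.inl hsstop)]
    calc s ^ 2 ≤ (∫⁻ ω, X ω ^ 2 ∂μ) * μ (⋃ i, E i) := hCS2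
      _ ≤ (s + s ^ 2) * μ (⋃ i, E i) := by gcongr
      _ = μ (⋃ i, E i) * (s + s ^ 2) := mul_comm _ _
  refine le_trans ?_ hdiv
  rw [ENNReal.le_div_iff_mul_le (Or.inl hss0) (Or.inl hsstop)]
  have hsub : (1 - s⁻¹) * (s + s ^ 2) = (s + s ^ 2) - s⁻¹ * (s + s ^ 2) := by
    rw [ENNReal.sub_mul (fun _ _ => ENNReal.add_ne_top.mpr ⟨hstop, ENNReal.pow_ne_top hstop⟩)]
    rw [one_mul]
  rw [hsub]
  have hinv : s⁻¹ * (s + s ^ 2) = 1 + s := by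
    rw [mul_add]
    rw [ENNReal.inv_mul_cancel hs0 hstop]
    congr 1
    rw [sq, ← mul_assoc, ENNReal.inv_mul_cancel hs0 hstop, one_mul]
  rw [hinv]
  rw [tsub_le_iff_right]
  calc s + s ^ 2 = s ^ 2 + s := add_comm _ _
    _ ≤ s ^ 2 + (1 + s) := by gcongr; exact le_add_self

lemma emptiness {K : Set (ℝ × ℝ)} (hK1 : volume K = 1) (n : ℕ) {B : Set (ℝ × ℝ)}
    (hB : MeasurableSet B) (hBK : B ⊆ K) (hBtop : volume B ≠ ∞) :
    unifPts K n {ω | ∀ k, ω k ∉ B} = (1 - volume B) ^ n := by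
  haveI : IsProbabilityMeasure (volume.restrict K) := ⟨by simpa using hK1⟩
  have hset : {ω : Fin n → ℝ × ℝ | ∀ k, ω k ∉ B} = Set.pi univ (fun _ => Bᶜ) := by
    ext ω; simp [Set.mem_pi]
  rw [hset, unifPts, Measure.pi_pi]
  have hres : volume.restrict K Bᶜ = 1 - volume B := by
    rw [Measure.restrict_apply hB.compl]
    have : Bᶜ ∩ K = K \ B := by ext x; simp [Set.mem_diff, and_comm]
    rw [this, measure_diff hBK hB.nullMeasurableSet hBtop, hK1]
  simp [hres]

lemma main_step {ι : Type*} [Fintype ι] {K : Set (ℝ × ℝ)} (hK1 : volume K = 1) (n : ℕ)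
    (A : ι → Set (ℝ × ℝ)) (hmeas : ∀ i, MeasurableSet (A i)) (hsub : ∀ i, A i ⊆ K)
    (hdisj : Pairwise (Function.onFun Disjoint A)) {α : ℝ} (hα0 : 0 ≤ α) (hα : α ≤ 1/2)
    (hvol : ∀ i, volume (A i) = ENNReal.ofReal α) :
    1 - (ENNReal.ofReal ((Fintype.card ι : ℝ) * (1-α)^n))⁻¹
      ≤ unifPts K n {ω | ∃ i, ∀ k, ω k ∉ A i} := by
  haveI : IsProbabilityMeasure (volume.restrict K) := ⟨by simpa using hK1⟩
  haveI : IsProbabilityMeasure (unifPts K n) := by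
    unfold unifPts; infer_instance
  set p : ℝ≥0∞ := ENNReal.ofReal ((1-α)^n) with hpdef
  have hαtop : (ENNReal.ofReal α) ≠ ∞ := ENNReal.ofReal_ne_top
  have h1α : (0:ℝ) ≤ 1 - α := by linarith
  have h12α : (0:ℝ) ≤ 1 - 2*α := by linarith
  set E : ι → Set (Fin n → ℝ × ℝ) := fun i => {ω | ∀ k, ω k ∉ A i} with hEdef
  have hEmeas : ∀ i, MeasurableSet (E i) := by
    intro i
    have : E i = Set.pi univ (fun _ => (A i)ᶜ) := by ext ω; simp [hEdef, Set.mem_pi]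
    rw [this]
    exact MeasurableSet.univ_pi fun _ => (hmeas i).compl
  have hp : ∀ i, unifPts K n (E i) = p := by
    intro i
    rw [hEdef]
    rw [emptiness hK1 n (hmeas i) (hsub i) (by rw [hvol i]; exact ENNReal.ofReal_ne_top)]
    rw [hvol i, hpdef]
    rw [← ENNReal.ofReal_one, ← ENNReal.ofReal_sub _ hα0, ENNReal.ofReal_pow h1α]
  have hpair : ∀ i j, i ≠ j → unifPts K n (E i ∩ E j) ≤ p ^ 2 := by
    intro i j hij
    have hset : E i ∩ E j = {ω : Fin n → ℝ × ℝ | ∀ k, ω k ∉ A i ∪ A j} := by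
      ext ω; simp [hEdef, not_or, forall_and]
    have hBm : MeasurableSet (A i ∪ A j) := (hmeas i).union (hmeas j)
    have hvolu : volume (A i ∪ A j) = ENNReal.ofReal (2*α) := by
      rw [measure_union (hdisj hij) (hmeas j), hvol i, hvol j,
        ← ENNReal.ofReal_add hα0 hα0]
      norm_num [two_mul]
    rw [hset, emptiness hK1 n hBm (Set.union_subset (hsub i) (hsub j))
      (by rw [hvolu]; exact ENNReal.ofReal_ne_top), hvolu]
    rw [← ENNReal.ofReal_one, ← ENNReal.ofReal_sub _ (by linarith : (0:ℝ) ≤ 2*α)]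
    rw [← ENNReal.ofReal_pow h12α, hpdef, ← ENNReal.ofReal_pow (pow_nonneg h1α n)]
    apply ENNReal.ofReal_le_ofReal
    calc (1 - 2*α)^n ≤ ((1-α)^2)^n := by
          apply pow_le_pow_left₀ h12α
          nlinarith
      _ = ((1-α)^n)^2 := by rw [← pow_mul, ← pow_mul, mul_comm]
  have hkey := second_moment (unifPts K n) E hEmeas p hp hpair
  have hcard : ((Fintype.card ι : ℝ≥0∞)) * p = ENNReal.ofReal ((Fintype.card ι : ℝ) * (1-α)^n) := by
    rw [hpdef, ENNReal.ofReal_mul (by positivity), ENNReal.ofReal_natCast]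
  rw [hcard] at hkey
  refine hkey.trans (measure_mono ?_)
  intro ω hω
  obtain ⟨_, ⟨i, rfl⟩, hmem⟩ := hω
  exact ⟨i, hmem⟩

lemma vol_homothet (x : ℝ × ℝ) (r : ℝ) (S : Set (ℝ × ℝ)) :
    volume ((fun y => x + r • y) '' S) = ENNReal.ofReal (r^2) * volume S := by
  have h1 : (fun y : ℝ × ℝ => x + r • y) '' S = x +ᵥ (r • S) := by
    rw [← Set.image_vadd, ← Set.image_smul, Set.image_image]
    rfl
  rw [h1, measure_vadd, Measure.addHaar_smul]
  congr 2
  have : Module.finrank ℝ (ℝ × ℝ) = 2 := by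
    simp [Module.finrank_prod]
  rw [this, abs_of_nonneg (sq_nonneg r)]

lemma homothet_subset (x : ℝ × ℝ) {r RL : ℝ} (hr : 0 ≤ r) {S : Set (ℝ × ℝ)}
    (hS : S ⊆ Metric.closedBall 0 RL) :
    (fun y => x + r • y) '' S ⊆ Metric.closedBall x (r * RL) := by
  rintro _ ⟨y, hy, rfl⟩
  rw [Metric.mem_closedBall, dist_eq_norm, add_sub_cancel_left, norm_smul,
    Real.norm_eq_abs, abs_of_nonneg hr]
  have : ‖y‖ ≤ RL := by
    have := hS hy
    rwa [Metric.mem_closedBall, dist_zero_right] at this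
  exact mul_le_mul_of_nonneg_left this hr

lemma one_le_abs_cast {a b : ℕ} (h : a ≠ b) : (1:ℝ) ≤ |(a:ℝ) - b| := by
  rcases h.lt_or_gt with hl | hl
  · have : (a:ℝ) + 1 ≤ b := by exact_mod_cast hl
    rw [abs_sub_comm]
    calc (1:ℝ) ≤ (b:ℝ) - a := by linarith
      _ ≤ |(b:ℝ) - a| := le_abs_self _
  · have : (b:ℝ) + 1 ≤ a := by exact_mod_cast hl
    calc (1:ℝ) ≤ (a:ℝ) - b := by linarith
      _ ≤ |(a:ℝ) - b| := le_abs_self _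

lemma grid (K L : Set (ℝ × ℝ)) (x0 : ℝ × ℝ) {δ RL : ℝ} (hδ : 0 < δ) (hRL : 0 < RL)
    (hQK : Metric.closedBall x0 δ ⊆ K) (hLR : L ⊆ Metric.closedBall 0 RL)
    {r : ℝ} (hr : 0 < r) {g : ℕ} (hg : 1 ≤ g) (hgr : (g:ℝ) * (2 * RL * r) ≤ δ) :
    ∃ A : Fin g × Fin g → Set (ℝ × ℝ),
      (∀ i, MeasurableSet (A i)) ∧ (∀ i, A i ⊆ K) ∧
      Pairwise (Function.onFun Disjoint A) ∧
      (∀ i, volume (A i) = ENNReal.ofReal (r^2) * volume (closure L)) ∧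
      (∀ i, ∃ x : ℝ × ℝ, A i = (fun y => x + r • y) '' (closure L)) := by
  have hg0 : (0:ℝ) < g := by exact_mod_cast hg
  set w : ℝ := 2*δ/g with hw
  have hw0 : 0 < w := by positivity
  have hgw : (g:ℝ) * w = 2*δ := by rw [hw]; field_simp
  set c : Fin g × Fin g → ℝ × ℝ := fun ij =>
    (x0.1 - δ + w/2 + ij.1 * w, x0.2 - δ + w/2 + ij.2 * w) with hc
  have hLc : closure L ⊆ Metric.closedBall 0 RL :=
    closure_minimal hLR Metric.isClosed_closedBall
  set A : Fin g × Fin g → Set (ℝ × ℝ) := fun ij => (fun y => c ij + r • y) '' (closure L) with hA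
  have hrw : r * RL ≤ w/4 := by
    rw [hw]
    rw [div_div]
    rw [le_div_iff₀ (by positivity)]
    nlinarith
  have hball : ∀ ij, A ij ⊆ Metric.closedBall (c ij) (w/4) := by
    intro ij
    exact (homothet_subset (c ij) hr.le hLc).trans
      (Metric.closedBall_subset_closedBall hrw)
  -- coordinates bound
  have hcoord : ∀ (i : Fin g), |(-δ + w/2 + (i:ℝ) * w)| ≤ δ - w/4 := by
    intro i
    have hi0 : (0:ℝ) ≤ (i:ℝ) := Nat.cast_nonneg _
    have hi1 : (i:ℝ) ≤ (g:ℝ) - 1 := by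
      have : (i:ℝ) + 1 ≤ g := by exact_mod_cast i.isLt
      linarith
    rw [abs_le]
    constructor
    · nlinarith
    · nlinarith
  have hdistc : ∀ ij, dist (c ij) x0 ≤ δ - w/4 := by
    intro ij
    rw [Prod.dist_eq]
    rw [sup_le_iff]
    constructor
    · have e : (c ij).1 - x0.1 = -δ + w/2 + (ij.1:ℝ) * w := by simp [hc]; ring
      rw [Real.dist_eq, e]; exact hcoord ij.1
    · have e : (c ij).2 - x0.2 = -δ + w/2 + (ij.2:ℝ) * w := by simp [hc]; ring
      rw [Real.dist_eq, e]; exact hcoord ij.2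
  have hsubK : ∀ ij, A ij ⊆ K := by
    intro ij
    refine (hball ij).trans (le_trans (Metric.closedBall_subset_closedBall' ?_) hQK)
    have := hdistc ij
    linarith
  refine ⟨A, ?_, hsubK, ?_, ?_, fun i => ⟨c i, rfl⟩⟩
  · intro ij
    have hcomp : IsCompact (A ij) := by
      have hLcomp : IsCompact (closure L) :=
        Metric.isCompact_of_isClosed_isBounded isClosed_closure
          (Metric.isBounded_closedBall.subset hLc)
      exact hLcomp.image (continuous_const.add (continuous_const_smul r))
    exact hcomp.isClosed.measurableSet
  · -- pairwise disjoint
    intro ij kl hne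
    have hdist : w ≤ dist (c ij) (c kl) := by
      rw [Prod.dist_eq]
      have hcases : ij.1 ≠ kl.1 ∨ ij.2 ≠ kl.2 := by
        by_contra h
        push_neg at h
        exact hne (Prod.ext h.1 h.2)
      rcases hcases with h | h
      · refine le_trans ?_ le_sup_left
        rw [hc, Real.dist_eq]
        have : (x0.1 - δ + w/2 + ij.1 * w) - (x0.1 - δ + w/2 + kl.1 * w)
            = ((ij.1:ℝ) - kl.1) * w := by ring
        rw [this, abs_mul, abs_of_nonneg hw0.le]
        calc w = 1 * w := (one_mul w).symm
          _ ≤ |(ij.1:ℝ) - kl.1| * w := by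
              have := one_le_abs_cast (fun hh : (ij.1:ℕ) = kl.1 => h (Fin.ext hh))
              exact mul_le_mul_of_nonneg_right this hw0.le
      · refine le_trans ?_ le_sup_right
        rw [hc, Real.dist_eq]
        have : (x0.2 - δ + w/2 + ij.2 * w) - (x0.2 - δ + w/2 + kl.2 * w)
            = ((ij.2:ℝ) - kl.2) * w := by ring
        rw [this, abs_mul, abs_of_nonneg hw0.le]
        calc w = 1 * w := (one_mul w).symm
          _ ≤ |(ij.2:ℝ) - kl.2| * w := by
              have := one_le_abs_cast (fun hh : (ij.2:ℕ) = kl.2 => h (Fin.ext hh))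
              exact mul_le_mul_of_nonneg_right this hw0.le
    refine Set.disjoint_of_subset (hball ij) (hball kl) ?_
    apply Metric.closedBall_disjoint_closedBall
    calc w/4 + w/4 = w/2 := by ring
      _ < w := by linarith
      _ ≤ dist (c ij) (c kl) := hdist
  · intro ij
    exact vol_homothet _ _ _

set_option maxHeartbeats 1000000 in
lemma aux_tendsto (K L : Set (ℝ × ℝ))
    (hKint : (interior K).Nonempty) (hKvol : volume K = 1)
    (hLconv : Convex ℝ L) (hLbd : IsBounded L) (hLint : (interior L).Nonempty)
    (ε : ℝ) (hε : 0 < ε) (hε2 : ε ≤ 1/2) :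
    Tendsto (fun n : ℕ =>
      unifPts K n {ω : Fin n → ℝ × ℝ |
        ∃ S : Set (ℝ × ℝ), IsHomothet L S ∧ S ⊆ K ∧ (∀ i, ω i ∉ interior S) ∧
          ENNReal.ofReal ((1 - ε) * Real.log n / n) ≤ volume S})
      atTop (nhds 1) := by
  -- geometry constants
  obtain ⟨x0, hx0⟩ := hKint
  obtain ⟨δ', hδ', hballK⟩ := Metric.mem_nhds_iff.mp (mem_interior_iff_mem_nhds.mp hx0)
  obtain ⟨δ, hδdef⟩ : ∃ x : ℝ, x = δ'/2 := ⟨_, rfl⟩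
  have hδ : 0 < δ := by rw [hδdef]; positivity
  have hQK : Metric.closedBall x0 δ ⊆ K :=
    (Metric.closedBall_subset_ball (by rw [hδdef]; linarith)).trans hballK
  obtain ⟨RL', hRL'⟩ := hLbd.subset_closedBall 0
  obtain ⟨RL, hRLdef⟩ : ∃ x : ℝ, x = max RL' 1 := ⟨_, rfl⟩
  have hRL : 0 < RL := by rw [hRLdef]; exact lt_of_lt_of_le one_pos (le_max_right _ _)
  have hLR : L ⊆ Metric.closedBall 0 RL :=
    hRL'.trans (Metric.closedBall_subset_closedBall (by rw [hRLdef]; exact le_max_left _ _))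
  -- volume of L
  have hLfin : volume L ≠ ∞ :=
    ((measure_mono hLR).trans_lt (isCompact_closedBall (0:ℝ×ℝ) RL).measure_lt_top).ne
  have hL0 : volume L ≠ 0 := by
    have := (isOpen_interior.measure_pos volume hLint).trans_le (measure_mono interior_subset)
    exact this.ne'
  obtain ⟨vr, hvrdef⟩ : ∃ x : ℝ, x = (volume L).toReal := ⟨_, rfl⟩
  have hvr : 0 < vr := by rw [hvrdef]; exact ENNReal.toReal_pos hL0 hLfin
  have hvol_ofReal : volume L = ENNReal.ofReal vr := by
    rw [hvrdef]; exact (ENNReal.ofReal_toReal hLfin).symm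
  have hclosure : volume (closure L) = volume L := by
    refine le_antisymm ?_ (measure_mono subset_closure)
    have h1 : closure L ⊆ L ∪ frontier L := by
      intro x hx
      rcases em (x ∈ interior L) with h | h
      · exact Or.inl (interior_subset h)
      · exact Or.inr ⟨hx, h⟩
    calc volume (closure L) ≤ volume (L ∪ frontier L) := measure_mono h1
      _ ≤ volume L + volume (frontier L) := measure_union_le _ _
      _ = volume L := by rw [Convex.addHaar_frontier volume hLconv, add_zero]
  -- sequences
  obtain ⟨c0, hc0⟩ : ∃ x : ℝ, x = 1 - ε/2 := ⟨_, rfl⟩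
  have hc0pos : 0 < c0 := by rw [hc0]; linarith
  have hc01 : c0 ≤ 1 := by rw [hc0]; linarith
  set a : ℕ → ℝ := fun n => c0 * Real.log n / n with ha
  set rr : ℕ → ℝ := fun n => Real.sqrt (a n / vr) with hrr
  set gg : ℕ → ℕ := fun n => ⌊δ / (2 * RL * rr n)⌋₊ with hgg
  set s : ℕ → ℝ := fun n => (gg n : ℝ)^2 * (1 - a n)^n with hs
  have hlogn : Tendsto (fun n : ℕ => Real.log n / n) atTop (nhds 0) := by
    have := (Real.isLittleO_log_id_atTop.tendsto_div_nhds_zero).comp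
      (tendsto_natCast_atTop_atTop (R := ℝ))
    simpa [Function.comp_def] using this
  have hat : Tendsto a atTop (nhds 0) := by
    have := hlogn.const_mul c0
    simpa [ha, mul_div_assoc, mul_zero] using this
  have hev_log : ∀ᶠ n : ℕ in atTop, 0 < Real.log n := by
    filter_upwards [eventually_ge_atTop 2] with n hn
    have : (2:ℝ) ≤ n := by exact_mod_cast hn
    exact Real.log_pos (by linarith)
  have hev_a0 : ∀ᶠ n in atTop, 0 < a n := by
    filter_upwards [hev_log, eventually_ge_atTop 1] with n h1 h2
    have hn0 : (0:ℝ) < n := by exact_mod_cast h2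
    exact div_pos (mul_pos hc0pos h1) hn0
  have hev_a2 : ∀ᶠ n in atTop, a n ≤ 1/2 := hat.eventually_le_const (by norm_num)
  have hrt : Tendsto rr atTop (nhds 0) := by
    have h1 : Tendsto (fun n => a n / vr) atTop (nhds 0) := by
      simpa using hat.div_const vr
    have := (Real.continuous_sqrt.tendsto 0).comp h1
    simpa [Function.comp_def, Real.sqrt_zero] using this
  have hev_r0 : ∀ᶠ n in atTop, 0 < rr n := by
    filter_upwards [hev_a0] with n hn
    exact Real.sqrt_pos.mpr (div_pos hn hvr)
  have hev_u2 : ∀ᶠ n in atTop, 2 ≤ δ / (2 * RL * rr n) := by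
    filter_upwards [hev_r0, hrt.eventually_le_const (show (0:ℝ) < δ/(8*RL) by positivity)]
      with n h1 h2
    rw [le_div_iff₀ (by positivity)]
    have h3 := (le_div_iff₀ (by positivity : (0:ℝ) < 8*RL)).mp h2
    nlinarith [hδ.le]
  have hev_g : ∀ᶠ n in atTop, 1 ≤ gg n ∧ (gg n:ℝ)*(2*RL*rr n) ≤ δ ∧
      δ/(4*RL*rr n) ≤ (gg n:ℝ) := by
    filter_upwards [hev_u2, hev_r0] with n hu hr0
    have hpos : 0 < 2*RL*rr n := by positivity
    refine ⟨?_, ?_, ?_⟩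
    · exact Nat.le_floor (by exact_mod_cast (by linarith : (1:ℝ) ≤ δ/(2*RL*rr n)))
    · have hfl := Nat.floor_le (show (0:ℝ) ≤ δ/(2*RL*rr n) by positivity)
      calc (gg n:ℝ)*(2*RL*rr n) ≤ (δ/(2*RL*rr n))*(2*RL*rr n) :=
            mul_le_mul_of_nonneg_right hfl hpos.le
        _ = δ := div_mul_cancel₀ _ hpos.ne'
    · have hfl : δ/(2*RL*rr n) - 1 < (gg n:ℝ) := Nat.sub_one_lt_floor _
      have he : δ/(4*RL*rr n) = (δ/(2*RL*rr n))/2 := by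
        rw [div_div]; ring
      rw [he]
      linarith
  -- the main eventual bound
  have hmain : ∀ᶠ n : ℕ in atTop, 1 - (ENNReal.ofReal (s n))⁻¹ ≤
      unifPts K n {ω : Fin n → ℝ × ℝ |
        ∃ S : Set (ℝ × ℝ), IsHomothet L S ∧ S ⊆ K ∧ (∀ i, ω i ∉ interior S) ∧
          ENNReal.ofReal ((1 - ε) * Real.log n / n) ≤ volume S} := by
    filter_upwards [hev_a0, hev_a2, hev_r0, hev_g, eventually_ge_atTop 1]
      with n ha0 ha2 hr0 hgf hn1
    obtain ⟨hg1, hgr, _⟩ := hgf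
    obtain ⟨A, hmeas, hsub, hdisj, hvolA, hAdef⟩ := grid K L x0 hδ hRL hQK hLR hr0 hg1 hgr
    have hr2 : (rr n)^2 = a n / vr := Real.sq_sqrt (by positivity)
    have hofR : ENNReal.ofReal ((rr n)^2) * volume L = ENNReal.ofReal (a n) := by
      rw [hvol_ofReal, ← ENNReal.ofReal_mul (sq_nonneg _), hr2, div_mul_cancel₀ _ hvr.ne']
    have hvolA' : ∀ i, volume (A i) = ENNReal.ofReal (a n) := by
      intro i
      rw [hvolA i, hclosure, hofR]
    have hkey := main_step hKvol n A hmeas hsub hdisj ha0.le ha2 hvolA'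
    have hcards : ((Fintype.card (Fin (gg n) × Fin (gg n)) : ℝ) * (1 - a n)^n) = s n := by
      rw [hs]
      push_cast [Fintype.card_prod, Fintype.card_fin]
      ring
    rw [hcards] at hkey
    refine hkey.trans (measure_mono ?_)
    rintro ω ⟨i, hi⟩
    obtain ⟨x, hx⟩ := hAdef i
    refine ⟨(fun y => x + rr n • y) '' L, ⟨x, rr n, hr0, rfl⟩, ?_, ?_, ?_⟩
    · refine le_trans ?_ (hsub i)
      rw [hx]
      exact Set.image_mono subset_closure
    · intro k hk
      apply hi k
      have : ω k ∈ (fun y => x + rr n • y) '' L := interior_subset hk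
      rw [hx]
      exact Set.image_mono subset_closure this
    · rw [vol_homothet, hofR]
      apply ENNReal.ofReal_le_ofReal
      have hlg : 0 ≤ Real.log n := Real.log_nonneg (by exact_mod_cast hn1)
      have hn0 : (0:ℝ) ≤ n := Nat.cast_nonneg n
      have h1 : (1 - ε) ≤ c0 := by rw [hc0]; linarith
      have : a n = c0 * Real.log n / n := rfl
      rw [this]
      gcongr
  -- asymptotics: s → ∞
  obtain ⟨C, hCdef⟩ : ∃ x : ℝ, x = δ^2 * vr / (16 * RL^2) := ⟨_, rfl⟩
  have hC : 0 < C := by rw [hCdef]; positivity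
  have hCc0 : 0 < C/c0 := by positivity
  have hev_E1 : ∀ᶠ n : ℕ in atTop, 2*(n:ℝ)*(a n)^2 ≤ ε/8 * Real.log n := by
    filter_upwards [hlogn.eventually_le_const (show (0:ℝ) < ε/16 by positivity),
      hev_log, eventually_ge_atTop 1] with n h1 h2 h3
    have hn0 : (0:ℝ) < n := by exact_mod_cast h3
    have key : 2*(n:ℝ)*(a n)^2 = (2 * c0^2 * Real.log n) * (Real.log n / n) := by
      have : a n = c0 * Real.log n / n := rfl
      rw [this]
      field_simp
    rw [key]
    have hlogdiv : 0 ≤ Real.log n / n := by positivity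
    calc (2 * c0^2 * Real.log n) * (Real.log n / n)
        ≤ (2 * 1 * Real.log n) * (ε/16) := by
          apply mul_le_mul
          · apply mul_le_mul_of_nonneg_right _ h2.le
            nlinarith
          · exact h1
          · exact hlogdiv
          · positivity
      _ = ε/8 * Real.log n := by ring
  have hev_E2 : ∀ᶠ n : ℕ in atTop, Real.log n ≤ Real.exp (ε/8 * Real.log n) := by
    have h := (isLittleO_log_rpow_atTop (show (0:ℝ) < ε/8 by positivity)).def one_pos
    have h2 := (tendsto_natCast_atTop_atTop (R := ℝ)).eventually h
    filter_upwards [h2, eventually_ge_atTop 1] with n hb hn1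
    have hn0 : (0:ℝ) < n := by exact_mod_cast hn1
    rw [Real.norm_eq_abs, Real.norm_eq_abs, one_mul] at hb
    calc Real.log n ≤ |Real.log n| := le_abs_self _
      _ ≤ |(n:ℝ) ^ (ε/8:ℝ)| := hb
      _ = (n:ℝ) ^ (ε/8:ℝ) := abs_of_nonneg (Real.rpow_nonneg hn0.le _)
      _ = Real.exp (ε/8 * Real.log n) := by
          rw [Real.rpow_def_of_pos hn0, mul_comm]
  have hev_lower : ∀ᶠ n : ℕ in atTop, (C/c0) * Real.exp (ε/4 * Real.log n) ≤ s n := by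
    filter_upwards [hev_a0, hev_a2, hev_r0, hev_g, hev_log, eventually_ge_atTop 1,
      hev_E1, hev_E2] with n ha0 ha2 hr0 hgf hlg hn1 hE1 hE2
    obtain ⟨hg1, hgr, hglow⟩ := hgf
    have hn0 : (0:ℝ) < n := by exact_mod_cast hn1
    have hr2 : (rr n)^2 = a n / vr := Real.sq_sqrt (by positivity)
    have hna : (n:ℝ) * a n = c0 * Real.log n := by
      have : a n = c0 * Real.log n / n := rfl
      rw [this]
      field_simp
    have hexpb : Real.exp (-((n:ℝ) * a n + 2*(n:ℝ)*(a n)^2)) ≤ (1 - a n)^n := by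
      have h1 := exp_le_one_sub ha0.le ha2
      have h2 : Real.exp (-(a n + 2*(a n)^2)) ^ n ≤ (1 - a n)^n :=
        pow_le_pow_left₀ (Real.exp_nonneg _) h1 n
      calc Real.exp (-((n:ℝ)*a n + 2*(n:ℝ)*(a n)^2))
          = Real.exp (-(a n + 2*(a n)^2))^n := by
            rw [← Real.exp_nat_mul]; congr 1; ring
        _ ≤ _ := h2
    have hg2 : C / a n ≤ (gg n:ℝ)^2 := by
      have h1 : (δ/(4*RL*rr n))^2 ≤ (gg n:ℝ)^2 := pow_le_pow_left₀ (by positivity) hglow 2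
      have h2 : (δ/(4*RL*rr n))^2 = C / a n := by
        have hrr2 : rr n ^ 2 * vr = a n := by rw [hr2, div_mul_cancel₀ _ hvr.ne']
        rw [hCdef, ← hrr2]
        field_simp
        ring
      linarith
    have hs_ge : C / a n * Real.exp (-((n:ℝ)*a n + 2*(n:ℝ)*(a n)^2)) ≤ s n := by
      rw [hs]
      exact mul_le_mul hg2 hexpb (Real.exp_nonneg _) (by positivity)
    refine le_trans ?_ hs_ge
    have e1 : C / a n = (C/c0) * ((n:ℝ) / Real.log n) := by
      have : a n = c0 * Real.log n / n := rfl
      rw [this, div_div_eq_mul_div]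
      ring
    rw [e1, hna, mul_assoc]
    refine mul_le_mul_of_nonneg_left ?_ hCc0.le
    have hinv : Real.exp (-(ε/8 * Real.log n)) ≤ 1/Real.log n := by
      rw [Real.exp_neg, one_div]
      exact inv_anti₀ hlg hE2
    have hstep : Real.exp (-(c0*Real.log n + ε/8*Real.log n)) ≤
        Real.exp (-(c0*Real.log n + 2*(n:ℝ)*(a n)^2)) :=
      Real.exp_le_exp.mpr (by linarith)
    calc Real.exp (ε/4 * Real.log n)
        = Real.exp (Real.log n) * Real.exp (-(ε/8*Real.log n)) *
            Real.exp (-(c0*Real.log n + ε/8*Real.log n)) := by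
          rw [← Real.exp_add, ← Real.exp_add]
          congr 1
          rw [hc0]
          ring
      _ ≤ Real.exp (Real.log n) * (1/Real.log n) *
            Real.exp (-(c0*Real.log n + 2*(n:ℝ)*(a n)^2)) := by
          apply mul_le_mul _ hstep (Real.exp_nonneg _) (by positivity)
          exact mul_le_mul_of_nonneg_left hinv (Real.exp_nonneg _)
      _ = (n:ℝ)/Real.log n * Real.exp (-(c0*Real.log n + 2*(n:ℝ)*(a n)^2)) := by
          rw [Real.exp_log hn0]
          ring
  have hlhs : Tendsto (fun n:ℕ => (C/c0) * Real.exp (ε/4 * Real.log n)) atTop atTop := by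
    apply Tendsto.const_mul_atTop hCc0
    apply Real.tendsto_exp_atTop.comp
    apply Tendsto.const_mul_atTop (show (0:ℝ) < ε/4 by positivity)
    exact Real.tendsto_log_atTop.comp (tendsto_natCast_atTop_atTop (R := ℝ))
  have hst : Tendsto s atTop atTop := tendsto_atTop_mono' atTop hev_lower hlhs
  have h1 : Tendsto (fun n => ENNReal.ofReal (s n)) atTop (nhds ⊤) :=
    ENNReal.tendsto_ofReal_atTop.comp hst
  have h2 : Tendsto (fun n => (ENNReal.ofReal (s n))⁻¹) atTop (nhds 0) := by
    have := ENNReal.tendsto_inv_iff.mpr h1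
    simpa using this
  have hlow : Tendsto (fun n => (1:ℝ≥0∞) - (ENNReal.ofReal (s n))⁻¹) atTop (nhds 1) := by
    have := ENNReal.Tendsto.sub
      (tendsto_const_nhds : Tendsto (fun _ : ℕ => (1:ℝ≥0∞)) atTop (nhds 1)) h2
      (Or.inr (by simp))
    simpa using this
  have hub : ∀ n : ℕ, unifPts K n {ω : Fin n → ℝ × ℝ |
      ∃ S : Set (ℝ × ℝ), IsHomothet L S ∧ S ⊆ K ∧ (∀ i, ω i ∉ interior S) ∧
        ENNReal.ofReal ((1 - ε) * Real.log n / n) ≤ volume S} ≤ 1 := by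
    intro n
    haveI : IsProbabilityMeasure (volume.restrict K) := ⟨by simpa using hKvol⟩
    haveI : IsProbabilityMeasure (unifPts K n) := by unfold unifPts; infer_instance
    exact prob_le_one
  exact tendsto_of_tendsto_of_tendsto_of_le_of_le' hlow tendsto_const_nhds hmain
    (Filter.Eventually.of_forall hub)

/-- Statement (1) in the proof of Theorem 1: for any fixed `ε > 0`, w.h.p. there
exists a hole contained in `K` homothetic to `L` with area at least `(1-ε) log n / n`. -/
theorem exists_large_homothetic_hole (K L : Set (ℝ × ℝ))
    (hKconv : Convex ℝ K) (hKbd : IsBounded K) (hKint : (interior K).Nonempty)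
    (hKvol : volume K = 1)
    (hLconv : Convex ℝ L) (hLbd : IsBounded L) (hLint : (interior L).Nonempty)
    (ε : ℝ) (hε : 0 < ε) :
    Tendsto (fun n : ℕ =>
      unifPts K n {ω : Fin n → ℝ × ℝ |
        ∃ S : Set (ℝ × ℝ), IsHomothet L S ∧ S ⊆ K ∧ (∀ i, ω i ∉ interior S) ∧
          ENNReal.ofReal ((1 - ε) * Real.log n / n) ≤ volume S})
      atTop (nhds 1) := by
  have hε' : 0 < min ε (1/2) := lt_min hε one_half_pos
  have hε'2 : min ε (1/2) ≤ 1/2 := min_le_right _ _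
  have haux := aux_tendsto K L hKint hKvol hLconv hLbd hLint _ hε' hε'2
  have hub : ∀ n : ℕ, unifPts K n {ω : Fin n → ℝ × ℝ |
      ∃ S : Set (ℝ × ℝ), IsHomothet L S ∧ S ⊆ K ∧ (∀ i, ω i ∉ interior S) ∧
        ENNReal.ofReal ((1 - ε) * Real.log n / n) ≤ volume S} ≤ 1 := by
    intro n
    haveI : IsProbabilityMeasure (volume.restrict K) := ⟨by simpa using hKvol⟩
    haveI : IsProbabilityMeasure (unifPts K n) := by unfold unifPts; infer_instance
    exact prob_le_one
  refine tendsto_of_tendsto_of_tendsto_of_le_of_le haux tendsto_const_nhds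
    (fun n => ?_) hub
  apply measure_mono
  rintro ω ⟨S, h1, h2, h3, h4⟩
  refine ⟨S, h1, h2, h3, le_trans (ENNReal.ofReal_le_ofReal ?_) h4⟩
  rcases Nat.eq_zero_or_pos n with h | h
  · simp [h]
  have hlg : (0:ℝ) ≤ Real.log n := Real.log_nonneg (by exact_mod_cast h)
  have hn0 : (0:ℝ) < n := by exact_mod_cast h
  have hle : (1-ε) * Real.log n ≤ (1 - min ε (1/2)) * Real.log n :=
    mul_le_mul_of_nonneg_right (by linarith [min_le_left ε (1/2)]) hlg
  exact (div_le_div_iff_of_pos_right hn0).mpr hle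
end
end

section
/- Let k, n be positive natural numbers with k ≥ 2. Suppose n balls are thrown independently and uniformly at random into k bins, and let Y be the random variable counting the number of bins that receive no ball. Then the variance of Y equals k·(1 − 1/k)^n + k·(k−1)·(1 − 2/k)^n − k²·(1 − 1/k)^{2n}. -/
open MeasureTheory ProbabilityTheory
open scoped ENNReal

noncomputable section

/-- The number of empty bins: the number of bins in `Fin k` not hit by any of the `n`
balls `ω 0, …, ω (n-1)`. -/
def emptyBins {n k : ℕ} (ω : Fin n → Fin k) : ℕ :=
  (Finset.univ.filter fun j : Fin k => ∀ i, ω i ≠ j).card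

lemma ite_one_mul_ite_one {p q : Prop} [Decidable p] [Decidable q] :
    (if p then (1:ℝ) else 0) * (if q then 1 else 0) = if p ∧ q then 1 else 0 := by
  split_ifs <;> simp_all

lemma card_pi_mem {n k : ℕ} (s : Finset (Fin k)) :
    (Finset.univ.filter fun ω : Fin n → Fin k => ∀ i, ω i ∈ s).card = s.card ^ n := by
  have h : (Finset.univ.filter fun ω : Fin n → Fin k => ∀ i, ω i ∈ s)
      = Fintype.piFinset fun _ => s := by
    ext ω
    simp [Fintype.mem_piFinset]
  rw [h, Fintype.card_piFinset]
  simp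

/-- **Proposition 2.1 (variance).** If `n` balls are thrown independently and uniformly
at random into `k ≥ 2` bins, and `Y` counts the empty bins, then
`Var[Y] = k (1 - 1/k)^n + k (k-1) (1 - 2/k)^n - k² (1 - 1/k)^{2n}`. -/
theorem variance_emptyBins (k n : ℕ) (hk : 2 ≤ k) (hn : 0 < n) :
    (∫ ω : Fin n → Fin k, ((emptyBins ω : ℝ)) ^ 2
        ∂(Measure.pi fun _ : Fin n => uniformOn (Set.univ : Set (Fin k)))) -
      (∫ ω : Fin n → Fin k, (emptyBins ω : ℝ)
        ∂(Measure.pi fun _ : Fin n => uniformOn (Set.univ : Set (Fin k)))) ^ 2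
      = (k : ℝ) * (1 - 1 / (k : ℝ)) ^ n
        + (k : ℝ) * ((k : ℝ) - 1) * (1 - 2 / (k : ℝ)) ^ n
        - (k : ℝ) ^ 2 * (1 - 1 / (k : ℝ)) ^ (2 * n) := by
  haveI : NeZero k := ⟨by omega⟩
  set μ := Measure.pi fun _ : Fin n => uniformOn (Set.univ : Set (Fin k)) with hμ
  haveI : IsProbabilityMeasure (uniformOn (Set.univ : Set (Fin k))) :=
    uniformOn_isProbabilityMeasure Set.finite_univ Set.univ_nonempty
  haveI : IsProbabilityMeasure μ := by rw [hμ]; infer_instance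
  have hk0 : (k : ℝ) ≠ 0 := by
    have : (0:ℝ) < k := by exact_mod_cast Nat.lt_of_lt_of_le (by norm_num) hk
    linarith
  -- singleton masses
  have hsing : ∀ ω : Fin n → Fin k, μ {ω} = ((k : ℝ≥0∞))⁻¹ ^ n := by
    intro ω
    rw [hμ, ← Set.univ_pi_singleton, Measure.pi_pi]
    simp [uniformOn_univ, Measure.count_singleton, ENNReal.div_eq_inv_mul]
  -- integrals as sums
  have hint : ∀ f : (Fin n → Fin k) → ℝ,
      ∫ ω, f ω ∂μ = ((k:ℝ)⁻¹)^n * ∑ ω : Fin n → Fin k, f ω := by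
    intro f
    rw [integral_fintype (Integrable.of_finite)]
    simp only [Measure.real, hsing, smul_eq_mul, ← Finset.mul_sum]
    congr 1
    rw [ENNReal.toReal_pow, ENNReal.toReal_inv]
    simp
  -- pointwise formula for emptyBins
  have hcount : ∀ ω : Fin n → Fin k,
      (emptyBins ω : ℝ) = ∑ j : Fin k, if (∀ i, ω i ≠ j) then (1:ℝ) else 0 := by
    intro ω
    rw [emptyBins, Finset.card_filter]
    push_cast
    rfl
  -- counting avoiders of one bin
  have havoid1 : ∀ j : Fin k,
      (Finset.univ.filter fun ω : Fin n → Fin k => ∀ i, ω i ≠ j).card = (k-1)^n := by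
    intro j
    have h : (Finset.univ.filter fun ω : Fin n → Fin k => ∀ i, ω i ≠ j)
        = Finset.univ.filter fun ω : Fin n → Fin k => ∀ i, ω i ∈ Finset.univ.erase j := by
      apply Finset.filter_congr
      intro ω _
      simp [Finset.mem_erase]
    rw [h, card_pi_mem, Finset.card_erase_of_mem (Finset.mem_univ _), Finset.card_univ,
      Fintype.card_fin]
  -- counting avoiders of two distinct bins
  have havoid2 : ∀ j j' : Fin k, j ≠ j' →
      (Finset.univ.filter fun ω : Fin n → Fin k =>
        (∀ i, ω i ≠ j) ∧ (∀ i, ω i ≠ j')).card = (k-2)^n := by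
    intro j j' hjj
    have h : (Finset.univ.filter fun ω : Fin n → Fin k => (∀ i, ω i ≠ j) ∧ (∀ i, ω i ≠ j'))
        = Finset.univ.filter fun ω : Fin n → Fin k =>
            ∀ i, ω i ∈ (Finset.univ.erase j).erase j' := by
      apply Finset.filter_congr
      intro ω _
      simp only [Finset.mem_erase, Finset.mem_univ, and_true, eq_self_iff_true]
      constructor
      · rintro ⟨h1, h2⟩ i; exact ⟨h2 i, h1 i⟩
      · intro h; exact ⟨fun i => (h i).2, fun i => (h i).1⟩
    rw [h, card_pi_mem, Finset.card_erase_of_mem (Finset.mem_erase.2 ⟨hjj.symm, Finset.mem_univ _⟩),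
      Finset.card_erase_of_mem (Finset.mem_univ _), Finset.card_univ, Fintype.card_fin,
      Nat.sub_sub]
  -- first moment sum
  have h1 : ∑ ω : Fin n → Fin k, (emptyBins ω : ℝ) = (k : ℝ) * ((k-1:ℕ) : ℝ)^n := by
    simp_rw [hcount]
    rw [Finset.sum_comm]
    have : ∀ j : Fin k,
        (∑ ω : Fin n → Fin k, if (∀ i, ω i ≠ j) then (1:ℝ) else 0) = ((k-1:ℕ):ℝ)^n := by
      intro j
      rw [Finset.sum_boole, havoid1 j]
      push_cast
      ring
    simp_rw [this, Finset.sum_const, Finset.card_univ, Fintype.card_fin, nsmul_eq_mul]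
  -- second moment sum
  have h2 : ∑ ω : Fin n → Fin k, (emptyBins ω : ℝ)^2
      = (k : ℝ) * ((k-1:ℕ) : ℝ)^n + (k : ℝ) * ((k:ℝ) - 1) * ((k-2:ℕ) : ℝ)^n := by
    have hsq : ∀ ω : Fin n → Fin k, (emptyBins ω : ℝ)^2
        = ∑ j : Fin k, ∑ j' : Fin k,
            if ((∀ i, ω i ≠ j) ∧ (∀ i, ω i ≠ j')) then (1:ℝ) else 0 := by
      intro ω
      rw [sq, hcount, Finset.sum_mul_sum]
      exact Finset.sum_congr rfl fun j _ => Finset.sum_congr rfl fun j' _ => ite_one_mul_ite_one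
    simp_rw [hsq]
    rw [Finset.sum_comm]
    have hin : ∀ j : Fin k, (∑ ω : Fin n → Fin k, ∑ j' : Fin k,
        if ((∀ i, ω i ≠ j) ∧ (∀ i, ω i ≠ j')) then (1:ℝ) else 0)
        = ((k-1:ℕ):ℝ)^n + ((k:ℝ) - 1) * ((k-2:ℕ):ℝ)^n := by
      intro j
      rw [Finset.sum_comm]
      have hterm : ∀ j' : Fin k, (∑ ω : Fin n → Fin k,
          if ((∀ i, ω i ≠ j) ∧ (∀ i, ω i ≠ j')) then (1:ℝ) else 0)
          = if j = j' then ((k-1:ℕ):ℝ)^n else ((k-2:ℕ):ℝ)^n := by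
        intro j'
        rw [Finset.sum_boole]
        by_cases hjj : j = j'
        · subst hjj
          simp only [if_true, and_self]
          rw [havoid1 j]; push_cast; ring
        · rw [if_neg hjj, havoid2 j j' hjj]; push_cast; ring
      simp_rw [hterm]
      rw [← Finset.add_sum_erase _ _ (Finset.mem_univ j)]
      simp only [if_pos rfl]
      congr 1
      rw [Finset.sum_congr rfl (fun j' hj' => if_neg (fun h => (Finset.mem_erase.1 hj').1 h.symm))]
      rw [Finset.sum_const, Finset.card_erase_of_mem (Finset.mem_univ _), Finset.card_univ,
        Fintype.card_fin, nsmul_eq_mul]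
      push_cast [Nat.cast_sub (by omega : 1 ≤ k)]
      ring
    simp_rw [hin, Finset.sum_const, Finset.card_univ, Fintype.card_fin, nsmul_eq_mul]
    ring
  rw [hint, hint, h1, h2]
  have hc1 : ((k-1:ℕ):ℝ) = (k:ℝ) - 1 := by
    push_cast [Nat.cast_sub (by omega : 1 ≤ k)]; ring
  have hc2 : ((k-2:ℕ):ℝ) = (k:ℝ) - 2 := by
    push_cast [Nat.cast_sub (by omega : 2 ≤ k)]; ring
  have e1 : (1 - 1/(k:ℝ))^n = ((k:ℝ)-1)^n * ((k:ℝ)⁻¹)^n := by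
    rw [← mul_pow]; congr 1; field_simp
  have e2 : (1 - 2/(k:ℝ))^n = ((k:ℝ)-2)^n * ((k:ℝ)⁻¹)^n := by
    rw [← mul_pow]; congr 1; field_simp
  rw [hc1, hc2, e1, e2, pow_mul', e1]
  ring
end
end

section
/- Let K be a bounded convex set in the plane with area 1 and diameter ρ, let ε > 0 be sufficiently small, let n be sufficiently large, and set θ₀ := ε(2+4ε)·log n/(4ρ²n). Then every rectangle of area (2+4ε)·log n / n contained in K contains a rectangle of area at least (2+2ε)·log n / n whose inclination equals t·θ₀ for some integer t with 0 ≤ t < π/θ₀. -/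
open MeasureTheory Set Bornology Pointwise

noncomputable section

/-- A rectangle with inclination `θ`. -/
def IsRectangleWithInclination (θ : ℝ) (R : Set (ℝ × ℝ)) : Prop :=
  ∃ (c : ℝ × ℝ) (w h : ℝ), 0 < w ∧ w ≤ h ∧
    R = (fun p => c + rot θ p) '' (Icc 0 w ×ˢ Icc 0 h)

/-! ### Auxiliary machinery -/

/-- `rot θ` as a linear map. -/
def rotLM (θ : ℝ) : (ℝ × ℝ) →ₗ[ℝ] (ℝ × ℝ) where
  toFun := rot θ
  map_add' p q := by simp [rot, Prod.ext_iff]; constructor <;> ring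
  map_smul' r p := by simp [rot, Prod.ext_iff]; constructor <;> ring

lemma rotLM_det (θ : ℝ) : LinearMap.det (rotLM θ) = 1 := by
  rw [← LinearMap.det_toMatrix (Module.Basis.finTwoProd ℝ), Matrix.det_fin_two]
  simp [LinearMap.toMatrix_apply, rotLM, rot, Module.Basis.finTwoProd]
  ring_nf
  rw [add_comm]
  exact Real.sin_sq_add_cos_sq θ

lemma rot_rot (θ φ : ℝ) (p : ℝ × ℝ) : rot θ (rot φ p) = rot (θ + φ) p := by
  simp [rot, Prod.ext_iff, Real.cos_add, Real.sin_add]; constructor <;> ring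

lemma rot_sub' (θ : ℝ) (p q : ℝ × ℝ) : rot θ (p - q) = rot θ p - rot θ q := by
  simp [rot, Prod.ext_iff]; constructor <;> ring

lemma rot_pi (θ : ℝ) (p : ℝ × ℝ) : rot (θ + Real.pi) p = - rot θ p := by
  simp [rot, Prod.ext_iff, Real.cos_add, Real.sin_add]; constructor <;> ring

lemma rot_two_pi_int (θ : ℝ) (k : ℤ) (p : ℝ × ℝ) : rot (θ + k * (2 * Real.pi)) p = rot θ p := by
  have hc : Real.cos (θ + k * (2 * Real.pi)) = Real.cos θ := Real.cos_add_int_mul_two_pi θ k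
  have hs : Real.sin (θ + k * (2 * Real.pi)) = Real.sin θ := by
    simpa using Real.sin_add_int_mul_two_pi θ k
  simp [rot, hc, hs]

/-- image of the box `[0,a] × [0,b]` under a rigid motion. -/
def rimg (θ : ℝ) (c : ℝ × ℝ) (a b : ℝ) : Set (ℝ × ℝ) :=
  (fun p => c + rot θ p) '' (Icc 0 a ×ˢ Icc 0 b)

lemma vol_rimg (θ : ℝ) (c : ℝ × ℝ) (a b : ℝ) (ha : 0 ≤ a) :
    volume (rimg θ c a b) = ENNReal.ofReal (a * b) := by
  have h1 : rimg θ c a b = c +ᵥ (rotLM θ '' (Icc 0 a ×ˢ Icc 0 b)) := by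
    rw [← Set.image_vadd, ← Set.image_comp]; rfl
  rw [h1, measure_vadd, Measure.addHaar_image_linearMap, rotLM_det]
  simp only [abs_one, ENNReal.ofReal_one, one_mul]
  rw [Measure.volume_eq_prod, Measure.prod_prod, Real.volume_Icc, Real.volume_Icc,
    ← ENNReal.ofReal_mul (by linarith)]
  norm_num

lemma rimg_two_pi_int (θ : ℝ) (k : ℤ) (c : ℝ × ℝ) (a b : ℝ) :
    rimg (θ + k * (2 * Real.pi)) c a b = rimg θ c a b := by
  unfold rimg; simp only [rot_two_pi_int]

lemma mem_box_sub {a b : ℝ} {p : ℝ × ℝ} (hp : p ∈ Icc 0 a ×ˢ Icc 0 b) :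
    ((a, b) : ℝ × ℝ) - p ∈ Icc 0 a ×ˢ Icc 0 b := by
  simp only [mem_prod, mem_Icc, Prod.fst_sub, Prod.snd_sub] at *
  obtain ⟨⟨h1, h2⟩, h3, h4⟩ := hp
  constructor <;> constructor <;> linarith

lemma rimg_pi (θ : ℝ) (c : ℝ × ℝ) (a b : ℝ) :
    rimg (θ + Real.pi) c a b = rimg θ (c - rot θ (a, b)) a b := by
  unfold rimg
  ext q
  constructor
  · rintro ⟨p, hp, rfl⟩
    refine ⟨(a, b) - p, mem_box_sub hp, ?_⟩
    show c - rot θ (a, b) + rot θ ((a, b) - p) = c + rot (θ + Real.pi) p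
    rw [rot_pi, rot_sub']; abel
  · rintro ⟨p, hp, rfl⟩
    refine ⟨(a, b) - p, mem_box_sub hp, ?_⟩
    show c + rot (θ + Real.pi) ((a, b) - p) = c - rot θ (a, b) + rot θ p
    rw [rot_pi, rot_sub']; abel

lemma rot_pi_div_two (θ : ℝ) (p : ℝ × ℝ) :
    rot (θ + Real.pi / 2) p = rot θ (-p.2, p.1) := by
  simp [rot, Prod.ext_iff, Real.cos_add_pi_div_two, Real.sin_add_pi_div_two]
  constructor <;> ring

lemma rimg_swap (θ : ℝ) (c : ℝ × ℝ) (a b : ℝ) :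
    rimg θ c a b = rimg (θ + Real.pi / 2) (c + rot θ (a, 0)) b a := by
  unfold rimg
  ext q
  simp only [mem_image, mem_prod, mem_Icc]
  constructor
  · rintro ⟨p, ⟨⟨h1, h2⟩, h3, h4⟩, rfl⟩
    refine ⟨(p.2, a - p.1), ⟨⟨h3, h4⟩, show (0:ℝ) ≤ a - p.1 by linarith,
      show a - p.1 ≤ a by linarith⟩, ?_⟩
    show c + rot θ (a, 0) + rot (θ + Real.pi / 2) (p.2, a - p.1) = c + rot θ p
    rw [rot_pi_div_two]
    simp [rot, Prod.ext_iff]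
    constructor <;> ring
  · rintro ⟨p, ⟨⟨h1, h2⟩, h3, h4⟩, rfl⟩
    refine ⟨(a - p.2, p.1), ⟨⟨show (0:ℝ) ≤ a - p.2 by linarith,
      show a - p.2 ≤ a by linarith⟩, h1, h2⟩, ?_⟩
    show c + rot θ (a - p.2, p.1) = c + rot θ (a, 0) + rot (θ + Real.pi / 2) p
    rw [rot_pi_div_two]
    simp [rot, Prod.ext_iff]
    constructor <;> ring

lemma reduce_mod_pi (θ : ℝ) (c : ℝ × ℝ) (a b : ℝ) :
    ∃ θ' c', 0 ≤ θ' ∧ θ' < Real.pi ∧ rimg θ c a b = rimg θ' c' a b := by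
  have hπ := Real.pi_pos
  set k : ℤ := ⌊θ / Real.pi⌋ with hk
  set θ' : ℝ := θ - k * Real.pi with hθ'
  have h0 : 0 ≤ θ' := by
    have : (k : ℝ) * Real.pi ≤ θ := by
      calc (k : ℝ) * Real.pi ≤ (θ / Real.pi) * Real.pi := by
            apply mul_le_mul_of_nonneg_right (Int.floor_le _) hπ.le
        _ = θ := div_mul_cancel₀ θ hπ.ne'
    rw [hθ']; linarith
  have h1 : θ' < Real.pi := by
    have h2 : θ / Real.pi < k + 1 := Int.lt_floor_add_one _
    have : θ < (k + 1 : ℝ) * Real.pi := by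
      calc θ = (θ / Real.pi) * Real.pi := (div_mul_cancel₀ θ hπ.ne').symm
        _ < (k + 1 : ℝ) * Real.pi := by
            apply mul_lt_mul_of_pos_right (by exact_mod_cast h2) hπ
    rw [hθ']; nlinarith
  rcases Int.even_or_odd k with ⟨m, hm⟩ | ⟨m, hm⟩
  · refine ⟨θ', c, h0, h1, ?_⟩
    have : θ = θ' + m * (2 * Real.pi) := by rw [hθ', hm]; push_cast; ring
    rw [this, rimg_two_pi_int]
  · refine ⟨θ', c - rot θ' (a, b), h0, h1, ?_⟩
    have : θ = (θ' + Real.pi) + m * (2 * Real.pi) := by rw [hθ', hm]; push_cast; ring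
    rw [this, rimg_two_pi_int, rimg_pi]

lemma normalizeRect (θ : ℝ) (c : ℝ × ℝ) (a b : ℝ) :
    ∃ θ' c' w h, 0 ≤ θ' ∧ θ' < Real.pi ∧ min a b ≤ w ∧ w ≤ h ∧ w * h = a * b ∧
      rimg θ c a b = rimg θ' c' w h := by
  rcases le_total a b with hab | hab
  · obtain ⟨θ', c', h0, h1, heq⟩ := reduce_mod_pi θ c a b
    exact ⟨θ', c', a, b, h0, h1, min_le_left a b, hab, rfl, heq⟩
  · obtain ⟨θ', c', h0, h1, heq⟩ := reduce_mod_pi (θ + Real.pi / 2) (c + rot θ (a, 0)) b a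
    exact ⟨θ', c', b, a, h0, h1, min_le_right a b, hab, mul_comm b a,
      (rimg_swap θ c a b).trans heq⟩

lemma inscribe (θ δ w h : ℝ) (c : ℝ × ℝ) (hδ0 : 0 ≤ δ) (hδ2 : δ ≤ Real.pi / 2)
    (hw0 : 0 ≤ w) (hh' : 0 ≤ h - w * Real.sin δ) :
    rimg (θ - δ) (c + rot θ (0, (w - h * Real.sin δ) * Real.sin δ))
      (w - h * Real.sin δ) (h - w * Real.sin δ) ⊆ rimg θ c w h := by
  have hπ := Real.pi_pos
  have hs0 : 0 ≤ Real.sin δ := Real.sin_nonneg_of_nonneg_of_le_pi hδ0 (by linarith)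
  have hs1 : Real.sin δ ≤ 1 := Real.sin_le_one δ
  have hc0 : 0 ≤ Real.cos δ := Real.cos_nonneg_of_mem_Icc ⟨by linarith, hδ2⟩
  have hc1 : Real.cos δ ≤ 1 := Real.cos_le_one δ
  set s := Real.sin δ
  set cd := Real.cos δ with hcd
  have hh0 : 0 ≤ h := le_trans (mul_nonneg hw0 hs0) (by linarith)
  rintro q ⟨p, hp, rfl⟩
  simp only [mem_prod, mem_Icc] at hp
  obtain ⟨⟨hx0, hx1⟩, hy0, hy1⟩ := hp
  refine ⟨(p.1 * cd + p.2 * s, (w - h * s) * s - p.1 * s + p.2 * cd), ?_, ?_⟩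
  · simp only [mem_prod, mem_Icc]
    refine ⟨⟨?_, ?_⟩, ?_, ?_⟩
    · positivity
    · nlinarith [mul_nonneg hx0 (sub_nonneg.2 hc1), mul_nonneg hy0 hs0,
        mul_nonneg hw0 hs0, mul_le_mul_of_nonneg_right hy1 hs0]
    · nlinarith [mul_nonneg (sub_nonneg.2 hx1) hs0, mul_nonneg hy0 hc0]
    · nlinarith [mul_nonneg hy0 (sub_nonneg.2 hc1), mul_nonneg hx0 hs0,
        mul_nonneg (mul_nonneg hh0 hs0) hs0,
        mul_le_mul_of_nonneg_right hy1 hc0]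
  · simp only [rot, Real.cos_sub, Real.sin_sub, Prod.ext_iff, Prod.fst_add, Prod.snd_add]
    constructor <;> ring

/-- the trivial corner points of `rimg`. -/
lemma corners_mem (θ : ℝ) (c : ℝ × ℝ) (w h : ℝ) (hw : 0 ≤ w) (hh : 0 ≤ h) :
    c ∈ rimg θ c w h ∧ c + rot θ (w, h) ∈ rimg θ c w h := by
  constructor
  · refine ⟨(0, 0), ?_, ?_⟩
    · simp only [mem_prod, mem_Icc]; exact ⟨⟨le_rfl, hw⟩, le_rfl, hh⟩
    · show c + rot θ (0, 0) = c; simp [rot]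
  · exact ⟨(w, h), by simp only [mem_prod, mem_Icc]; exact ⟨⟨hw, le_rfl⟩, hh, le_rfl⟩, rfl⟩

set_option maxHeartbeats 1000000 in
/-- **Claim A.** Let `K` be a bounded convex set of area 1 and diameter `ρ`, let `ε > 0`
be sufficiently small and `n` sufficiently large, and set
`θ₀ = ε(2+4ε) log n / (4ρ²n)`.  Every rectangle of area `(2+4ε) log n / n` contained in
`K` contains a rectangle of area at least `(2+2ε) log n / n` whose inclination is `t θ₀`
for some integer `0 ≤ t < π/θ₀`. -/
theorem rectangle_rounded_inclination (K : Set (ℝ × ℝ))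
    (hKconv : Convex ℝ K) (hKbd : IsBounded K) (hKvol : volume K = 1) :
    ∃ ε₀ : ℝ, 0 < ε₀ ∧ ∀ ε : ℝ, 0 < ε → ε < ε₀ →
      ∃ N : ℕ, ∀ n : ℕ, N ≤ n →
        ∀ R : Set (ℝ × ℝ), IsRectangle R → R ⊆ K →
          volume R = ENNReal.ofReal ((2 + 4 * ε) * Real.log n / n) →
          ∃ (R' : Set (ℝ × ℝ)) (t : ℕ),
            (t : ℝ) < Real.pi /
              (ε * (2 + 4 * ε) * Real.log n / (4 * Metric.diam K ^ 2 * n)) ∧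
            IsRectangleWithInclination
              ((t : ℝ) * (ε * (2 + 4 * ε) * Real.log n / (4 * Metric.diam K ^ 2 * n)))
              R' ∧
            R' ⊆ R ∧
            ENNReal.ofReal ((2 + 2 * ε) * Real.log n / n) ≤ volume R' := by
  have hπ := Real.pi_pos
  have hπ3 := Real.pi_gt_three
  set ρ := Metric.diam K with hρdef
  have hρ0 : 0 ≤ ρ := Metric.diam_nonneg
  -- K is nonempty
  have hne : K.Nonempty := by
    rcases Set.eq_empty_or_nonempty K with h | h
    · rw [h] at hKvol; simp at hKvol
    · exact h
  -- 1 ≤ 4 ρ²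
  have hρ2 : 1 ≤ 4 * ρ ^ 2 := by
    obtain ⟨x, hx⟩ := hne
    have hsub : K ⊆ Metric.closedBall x ρ := fun y hy =>
      Metric.mem_closedBall.2 (Metric.dist_le_diam_of_mem hKbd hy hx)
    have hv : volume (Metric.closedBall x ρ)
        = ENNReal.ofReal (2 * ρ) * ENNReal.ofReal (2 * ρ) := by
      obtain ⟨x1, x2⟩ := x
      rw [← closedBall_prod_same, Measure.volume_eq_prod, Measure.prod_prod,
        Real.closedBall_eq_Icc, Real.closedBall_eq_Icc, Real.volume_Icc, Real.volume_Icc]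
      norm_num; ring_nf
      rw [ENNReal.ofReal_mul hρ0, mul_pow]; norm_num
    have h1 : (1 : ENNReal) ≤ ENNReal.ofReal (2 * ρ) * ENNReal.ofReal (2 * ρ) := by
      rw [← hv, ← hKvol]; exact measure_mono hsub
    rw [← ENNReal.ofReal_mul (by linarith)] at h1
    have h2 := ENNReal.one_le_ofReal.1 h1
    nlinarith [h2]
  have hρpos : 0 < ρ := by nlinarith
  refine ⟨1/2, by norm_num, ?_⟩
  intro ε hε0 hε1
  refine ⟨64, ?_⟩
  intro n hn R hRrect hRK hRvol
  have hn1 : (64 : ℝ) ≤ (n : ℝ) := by exact_mod_cast hn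
  have hnpos : (0 : ℝ) < n := by linarith
  have hL0 : 0 < Real.log n := Real.log_pos (by linarith)
  -- log n ≤ n / 4
  have hlogn : Real.log n ≤ n / 4 := by
    have hsq : Real.sqrt n ^ 2 = (n : ℝ) := Real.sq_sqrt hnpos.le
    have hsq8 : (8 : ℝ) ≤ Real.sqrt n := by
      have : (8 : ℝ) = Real.sqrt 64 := by
        rw [show (64 : ℝ) = 8 ^ 2 by norm_num, Real.sqrt_sq (by norm_num)]
      rw [this]; exact Real.sqrt_le_sqrt hn1
    have hlog2 : Real.log n = 2 * Real.log (Real.sqrt n) := by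
      rw [Real.log_sqrt hnpos.le]; ring
    have h3 : Real.log (Real.sqrt n) ≤ Real.sqrt n - 1 :=
      Real.log_le_sub_one_of_pos (by positivity)
    have h4 : 8 * Real.sqrt n ≤ (n : ℝ) := by
      calc 8 * Real.sqrt n ≤ Real.sqrt n * Real.sqrt n :=
            mul_le_mul_of_nonneg_right hsq8 (Real.sqrt_nonneg _)
        _ = (n : ℝ) := by rw [← sq]; exact hsq
    linarith
  set L := Real.log n with hLdef
  clear_value L
  set θ₀ : ℝ := ε * (2 + 4 * ε) * L / (4 * ρ ^ 2 * n) with hθ₀def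
  have hden : (0 : ℝ) < 4 * ρ ^ 2 * n := by positivity
  have hθ₀pos : 0 < θ₀ := by
    rw [hθ₀def]
    exact div_pos (mul_pos (mul_pos hε0 (by linarith)) hL0) hden
  have hθ₀le : θ₀ ≤ 1 / 2 := by
    rw [hθ₀def, div_le_iff₀ hden]
    have e1 : ε * (2 + 4 * ε) ≤ 2 := by nlinarith
    have e2 : ε * (2 + 4 * ε) * L ≤ 2 * L :=
      mul_le_mul_of_nonneg_right e1 hL0.le
    have e4 : (0 : ℝ) ≤ (4 * ρ ^ 2 - 1) * n :=
      mul_nonneg (by linarith) hnpos.le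
    linarith
  clear_value θ₀
  set A : ℝ := (2 + 4 * ε) * L / n with hAdef
  have hApos : 0 < A := by
    rw [hAdef]; exact div_pos (mul_pos (by linarith) hL0) hnpos
  clear_value A
  have hθ₀A : θ₀ = ε * A / (4 * ρ ^ 2) := by
    rw [hθ₀def, hAdef]; field_simp
  -- normalize the rectangle
  obtain ⟨θ₁, c₁, a, b, ha, hb, hReq⟩ := hRrect
  have hReq' : R = rimg θ₁ c₁ a b := hReq
  obtain ⟨θ, c, w, h, hθ0, hθπ, hwmin, hwh, hwhab, heq⟩ := normalizeRect θ₁ c₁ a b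
  have hRwh : R = rimg θ c w h := hReq'.trans heq
  have hw0 : 0 < w := lt_of_lt_of_le (lt_min ha hb) hwmin
  have hh0 : 0 < h := lt_of_lt_of_le hw0 hwh
  -- area
  have hvol : volume R = ENNReal.ofReal (w * h) := by rw [hRwh]; exact vol_rimg _ _ _ _ hw0.le
  have hwhA : w * h = A := by
    rw [hvol] at hRvol
    exact (ENNReal.ofReal_eq_ofReal_iff (mul_nonneg hw0.le hh0.le) hApos.le).1 hRvol
  -- diagonal bound : w² + h² ≤ 2 ρ²
  have hdiag : w ^ 2 + h ^ 2 ≤ 2 * ρ ^ 2 := by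
    obtain ⟨hc_mem, hc2_mem⟩ := corners_mem θ c w h hw0.le hh0.le
    rw [← hRwh] at hc_mem hc2_mem
    have hdist : dist (c + rot θ (w, h)) c ≤ ρ :=
      Metric.dist_le_diam_of_mem hKbd (hRK hc2_mem) (hRK hc_mem)
    rw [Prod.dist_eq] at hdist
    have h1 : |w * Real.cos θ - h * Real.sin θ| ≤ ρ := by
      have : dist (c + rot θ (w, h)).1 c.1 = |w * Real.cos θ - h * Real.sin θ| := by
        simp [rot, Real.dist_eq]
      rw [← this]; exact le_trans (le_max_left _ _) hdist
    have h2 : |w * Real.sin θ + h * Real.cos θ| ≤ ρ := by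
      have : dist (c + rot θ (w, h)).2 c.2 = |w * Real.sin θ + h * Real.cos θ| := by
        simp [rot, Real.dist_eq]
      rw [← this]; exact le_trans (le_max_right _ _) hdist
    have e1 : (w * Real.cos θ - h * Real.sin θ) ^ 2 ≤ ρ ^ 2 :=
      sq_le_sq' (by linarith [abs_le.1 h1]) (by linarith [abs_le.1 h1])
    have e2 : (w * Real.sin θ + h * Real.cos θ) ^ 2 ≤ ρ ^ 2 :=
      sq_le_sq' (by linarith [abs_le.1 h2]) (by linarith [abs_le.1 h2])
    have epyth : (w * Real.cos θ - h * Real.sin θ) ^ 2 + (w * Real.sin θ + h * Real.cos θ) ^ 2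
        = w ^ 2 + h ^ 2 := by
      linear_combination (w ^ 2 + h ^ 2) * (Real.sin_sq_add_cos_sq θ)
    linarith
  -- choose t and δ
  set t : ℕ := ⌊θ / θ₀⌋₊ with htdef
  set δ : ℝ := θ - t * θ₀ with hδdef
  clear_value t
  have htle : (t : ℝ) * θ₀ ≤ θ := by
    have h1 : (t : ℝ) ≤ θ / θ₀ := by
      rw [htdef]; exact Nat.floor_le (div_nonneg hθ0 hθ₀pos.le)
    calc (t : ℝ) * θ₀ ≤ (θ / θ₀) * θ₀ := mul_le_mul_of_nonneg_right h1 hθ₀pos.le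
      _ = θ := div_mul_cancel₀ θ hθ₀pos.ne'
  have hδ0 : 0 ≤ δ := by rw [hδdef]; linarith
  have hδθ₀ : δ < θ₀ := by
    have h1 : θ / θ₀ < (t : ℝ) + 1 := by rw [htdef]; exact Nat.lt_floor_add_one _
    have h2 : θ < ((t : ℝ) + 1) * θ₀ := by
      calc θ = (θ / θ₀) * θ₀ := (div_mul_cancel₀ θ hθ₀pos.ne').symm
        _ < ((t : ℝ) + 1) * θ₀ := mul_lt_mul_of_pos_right h1 hθ₀pos
    rw [hδdef]; linarith
  have ht : (t : ℝ) < Real.pi / θ₀ := by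
    have h1 : (t : ℝ) ≤ θ / θ₀ := by
      rw [htdef]; exact Nat.floor_le (div_nonneg hθ0 hθ₀pos.le)
    have h2 : θ / θ₀ < Real.pi / θ₀ := div_lt_div_of_pos_right hθπ hθ₀pos
    linarith
  clear_value δ
  have hδ2 : δ ≤ Real.pi / 2 := by linarith
  set s : ℝ := Real.sin δ with hsdef
  have hs0 : 0 ≤ s := by
    rw [hsdef]; exact Real.sin_nonneg_of_nonneg_of_le_pi hδ0 (by linarith)
  have hsδ : s ≤ δ := by rw [hsdef]; exact Real.sin_le hδ0
  clear_value s
  have hsθ₀ : s ≤ θ₀ := by linarith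
  have hs1 : s ≤ 1 := by linarith
  have hh2 : h ^ 2 ≤ 2 * ρ ^ 2 := by linarith [sq_nonneg w]
  -- positivity of the shrunken sides
  have hw' : 0 < w - h * s := by
    have k1 : h ^ 2 * s ≤ 2 * ρ ^ 2 * θ₀ :=
      mul_le_mul hh2 hsθ₀ hs0 (by positivity)
    have k2 : 2 * ρ ^ 2 * θ₀ = ε * A / 2 := by rw [hθ₀A]; field_simp; ring
    have k3 : ε * A < 2 * A := by
      have := mul_pos (show (0:ℝ) < 2 - ε by linarith) hApos
      linarith
    have k4 : h * s * h < w * h := by rw [hwhA]; linarith [k1]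
    have k5 : h * s < w := lt_of_mul_lt_mul_right k4 hh0.le
    linarith
  have hh' : 0 < h - w * s := by
    have k1 : w * s ≤ h * s := mul_le_mul_of_nonneg_right hwh hs0
    linarith
  have hw'h' : w - h * s ≤ h - w * s := by
    have k1 : 0 ≤ (h - w) * (1 + s) := mul_nonneg (by linarith) (by linarith)
    linarith [k1]
  refine ⟨rimg ((t : ℝ) * θ₀) (c + rot θ (0, (w - h * s) * s)) (w - h * s) (h - w * s),
    t, ht, ?_, ?_, ?_⟩
  · exact ⟨_, _, _, hw', hw'h', rfl⟩
  · rw [hRwh, hsdef, show (t : ℝ) * θ₀ = θ - δ by rw [hδdef]; ring]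
    exact inscribe θ δ w h c hδ0 hδ2 hw0.le (by rw [← hsdef]; linarith)
  · rw [vol_rimg _ _ _ _ hw'.le]
    apply ENNReal.ofReal_le_ofReal
    have key1 : (w - h * s) * (h - w * s) = A - (w ^ 2 + h ^ 2) * s + A * s ^ 2 := by
      rw [← hwhA]; ring
    have key2 : (w ^ 2 + h ^ 2) * s ≤ 2 * ρ ^ 2 * θ₀ :=
      mul_le_mul hdiag hsθ₀ hs0 (by positivity)
    have key3 : 2 * ρ ^ 2 * θ₀ = ε * A / 2 := by rw [hθ₀A]; field_simp; ring
    have key4 : 0 ≤ A * s ^ 2 := mul_nonneg hApos.le (sq_nonneg s)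
    have e5 : A - ε * A / 2 ≤ (w - h * s) * (h - w * s) := by
      rw [key1]; linarith
    have e6 : (2 + 2 * ε) * L / n ≤ A - ε * A / 2 := by
      have hpos : 0 ≤ ε * (1 - 2 * ε) * (L / n) :=
        mul_nonneg (mul_nonneg hε0.le (by linarith)) (div_nonneg hL0.le hnpos.le)
      rw [hAdef]
      have hid : (2 + 4 * ε) * L / n - ε * ((2 + 4 * ε) * L / n) / 2 - (2 + 2 * ε) * L / n
          = ε * (1 - 2 * ε) * (L / n) := by ring
      linarith [hpos, hid]
    linarith
end
end
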